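/- Let A = ℂ[u^{±1}]⋊Γ. Then the ℂ-linear span of the commutators {xy − yx : x, y ∈ A} equals the ℂ-linear span of the set {u^j ξ^i : j ∈ ℤ, 1 ≤ i ≤ d−1} ∪ {u^j : j ∈ ℤ, d ∤ j}. -/

import Mathlib

/-!
STATEMENT 4: In `A = ℂ[u^{±1}] ⋊ Γ` (with `Γ = ℤ/dℤ`, `ξ` a generator acting by
`ξ(u) = ζu` for a primitive `d`-th root of unity `ζ`), the ℂ-linear span of the
commutators `{xy − yx}` equals the ℂ-linear span of
`{u^j ξ^i : j ∈ ℤ, 1 ≤ i ≤ d−1} ∪ {u^j : j ∈ ℤ, d ∤ j}`.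

The skew group algebra is formalized abstractly: `A` is any associative unital
ℂ-algebra with a ℂ-basis `b j i` (representing `u^j ξ^i`, `j ∈ ℤ`, `i ∈ ℤ/dℤ`)
satisfying `b 0 0 = 1` and the multiplication rule
`(u^{j₁}ξ^{i₁})·(u^{j₂}ξ^{i₂}) = ζ^{i₁ j₂} u^{j₁+j₂} ξ^{i₁+i₂}`.
-/

/-- Data exhibiting `A` as the skew group algebra `ℂ[u^{±1}] ⋊ (ℤ/dℤ)`,
where `b j i` represents the basis element `u^j ξ^i`. -/
structure SkewLaurentAlgebra (d : ℕ) (ζ : ℂ) (A : Type) [Ring A] [Algebra ℂ A] where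
  b : ℤ → ZMod d → A
  basis : Module.Basis (ℤ × ZMod d) ℂ A
  basis_eq : ∀ (j : ℤ) (i : ZMod d), basis (j, i) = b j i
  b_one : b 0 0 = 1
  b_mul : ∀ (j₁ j₂ : ℤ) (i₁ i₂ : ZMod d),
    b j₁ i₁ * b j₂ i₂ = (ζ ^ ((i₁.val : ℤ) * j₂)) • b (j₁ + j₂) (i₁ + i₂)

theorem stmt_4 (d : ℕ) (hd : 0 < d) (ζ : ℂ) (hζ : IsPrimitiveRoot ζ d)
    (A : Type) [Ring A] [Algebra ℂ A] (S : SkewLaurentAlgebra d ζ A) :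
    Submodule.span ℂ {x : A | ∃ y z : A, x = y * z - z * y}
      = Submodule.span ℂ
          ({x : A | ∃ (j : ℤ) (i : ZMod d), i ≠ 0 ∧ x = S.b j i}
            ∪ {x : A | ∃ j : ℤ, ¬ ((d : ℤ) ∣ j) ∧ x = S.b j 0}) := by
  haveI : NeZero d := ⟨hd.ne'⟩
  have hz1 : ∀ n : ℤ, ζ ^ n = 1 ↔ (d : ℤ) ∣ n := fun n => hζ.zpow_eq_one_iff_dvd n
  set M := Submodule.span ℂ
          ({x : A | ∃ (j : ℤ) (i : ZMod d), i ≠ 0 ∧ x = S.b j i}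
            ∪ {x : A | ∃ j : ℤ, ¬ ((d : ℤ) ∣ j) ∧ x = S.b j 0}) with hM
  apply le_antisymm
  · rw [Submodule.span_le]
    rintro x ⟨y, z, rfl⟩
    -- key: commutators of basis elements are in M
    have key : ∀ (j₁ j₂ : ℤ) (i₁ i₂ : ZMod d),
        S.b j₁ i₁ * S.b j₂ i₂ - S.b j₂ i₂ * S.b j₁ i₁ ∈ M := by
      intro j₁ j₂ i₁ i₂
      rw [S.b_mul, S.b_mul, add_comm j₂ j₁, add_comm i₂ i₁, ← sub_smul]
      by_cases hi : i₁ + i₂ = 0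
      · by_cases hj : (d : ℤ) ∣ j₁ + j₂
        · have hs : ζ ^ ((i₁.val : ℤ) * j₂) = ζ ^ ((i₂.val : ℤ) * j₁) := by
            have hdvd : (d : ℤ) ∣ ((i₁.val : ℤ) + i₂.val) := by
              have : ((i₁.val + i₂.val : ℕ) : ZMod d) = 0 := by
                push_cast [ZMod.natCast_val, ZMod.cast_id] at *
                simpa using hi
              exact_mod_cast (ZMod.natCast_eq_zero_iff _ _).mp this
            have hz : ζ ≠ 0 := hζ.ne_zero hd.ne'
            have h1 : ζ ^ ((i₁.val : ℤ) * j₂ - (i₂.val : ℤ) * j₁) = 1 := by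
              rw [hz1]
              have : (i₁.val : ℤ) * j₂ - (i₂.val : ℤ) * j₁
                  = (i₁.val : ℤ) * (j₁ + j₂) - ((i₁.val : ℤ) + i₂.val) * j₁ := by ring
              rw [this]
              exact dvd_sub (Dvd.dvd.mul_left hj _) (Dvd.dvd.mul_right hdvd _)
            rw [← sub_add_cancel ((i₁.val : ℤ) * j₂) ((i₂.val : ℤ) * j₁),
              zpow_add₀ hz, h1, one_mul]
          rw [hs, sub_self, zero_smul]
          exact Submodule.zero_mem M
        · refine Submodule.smul_mem M _ (Submodule.subset_span ?_)
          right
          exact ⟨j₁ + j₂, hj, by rw [hi]⟩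
      · refine Submodule.smul_mem M _ (Submodule.subset_span ?_)
        left
        exact ⟨j₁ + j₂, i₁ + i₂, hi, rfl⟩
    have step1 : ∀ (j : ℤ) (i : ZMod d) (y : A),
        y * S.b j i - S.b j i * y ∈ M := by
      intro j i
      have hle : Submodule.span ℂ (Set.range S.basis) ≤
          Submodule.comap (LinearMap.mulRight ℂ (S.b j i) - LinearMap.mulLeft ℂ (S.b j i)) M := by
        rw [Submodule.span_le]
        rintro _ ⟨q, rfl⟩
        simp only [Submodule.mem_comap, LinearMap.sub_apply, LinearMap.mulRight_apply,
          LinearMap.mulLeft_apply, SetLike.mem_coe, S.basis_eq q.1 q.2]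
        exact key q.1 j q.2 i
      intro y
      have hy : y ∈ Submodule.span ℂ (Set.range S.basis) := by
        rw [S.basis.span_eq]; trivial
      simpa using hle hy
    -- now fix y, vary z
    have hle2 : Submodule.span ℂ (Set.range S.basis) ≤
        Submodule.comap (LinearMap.mulLeft ℂ y - LinearMap.mulRight ℂ y) M := by
      rw [Submodule.span_le]
      rintro _ ⟨q, rfl⟩
      simp only [Submodule.mem_comap, LinearMap.sub_apply, LinearMap.mulRight_apply,
        LinearMap.mulLeft_apply, SetLike.mem_coe, S.basis_eq q.1 q.2]
      exact step1 q.1 q.2 y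
    have hz : z ∈ Submodule.span ℂ (Set.range S.basis) := by
      rw [S.basis.span_eq]; trivial
    simpa using hle2 hz
  · rw [Submodule.span_le]
    rintro x (⟨j, i, hi, rfl⟩ | ⟨j, hj, rfl⟩)
    · -- b j i = (ζ^i.val - 1)⁻¹ • [b (j-1) i, b 1 0]
      have hival : 0 < i.val := Nat.pos_of_ne_zero
        (fun h => hi (by rwa [← ZMod.val_eq_zero]))
      have hc : ζ ^ ((i.val : ℤ) * 1) - 1 ≠ 0 := by
        rw [sub_ne_zero, mul_one, Ne, hz1]
        intro h
        have := Int.le_of_dvd (by exact_mod_cast hival) h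
        have hlt : i.val < d := ZMod.val_lt i
        omega
      have heq2 : S.b (j - 1) i * S.b 1 0 - S.b 1 0 * S.b (j - 1) i
          = (ζ ^ ((i.val : ℤ) * 1) - 1) • S.b j i := by
        rw [S.b_mul, S.b_mul, sub_smul, one_smul, ZMod.val_zero]
        norm_num [show (1 : ℤ) + (j - 1) = j by ring, show j - 1 + 1 = j by ring]
      have heq : S.b j i = (ζ ^ ((i.val : ℤ) * 1) - 1)⁻¹ •
          (S.b (j - 1) i * S.b 1 0 - S.b 1 0 * S.b (j - 1) i) := by
        rw [heq2, smul_smul, inv_mul_cancel₀ hc, one_smul]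
      rw [heq]
      refine Submodule.smul_mem _ _ (Submodule.subset_span ?_)
      exact ⟨S.b (j - 1) i, S.b 1 0, rfl⟩
    · -- b j 0, d ∤ j ; note d ≥ 2
      have hd2 : 1 < d := by
        rcases Nat.lt_or_ge 1 d with h | h
        · exact h
        · exfalso
          apply hj
          have hd1 : d = 1 := le_antisymm h hd
          rw [hd1]
          exact_mod_cast one_dvd j
      haveI : Fact (1 < d) := ⟨hd2⟩
      have hone : ((1 : ZMod d).val : ℤ) = 1 := by
        rw [ZMod.val_one d]; norm_num
      have hc : ζ ^ (((1 : ZMod d).val : ℤ) * j) - 1 ≠ 0 := by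
        rw [sub_ne_zero, Ne, hz1, hone, one_mul]
        exact hj
      have heq2 : S.b 0 1 * S.b j (-1) - S.b j (-1) * S.b 0 1
          = (ζ ^ (((1 : ZMod d).val : ℤ) * j) - 1) • S.b j 0 := by
        rw [S.b_mul, S.b_mul, sub_smul, one_smul]
        norm_num
      have heq : S.b j 0 = (ζ ^ (((1 : ZMod d).val : ℤ) * j) - 1)⁻¹ •
          (S.b 0 1 * S.b j (-1) - S.b j (-1) * S.b 0 1) := by
        rw [heq2, smul_smul, inv_mul_cancel₀ hc, one_smul]
      rw [heq]
      refine Submodule.smul_mem _ _ (Submodule.subset_span ?_)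
      exact ⟨S.b 0 1, S.b j (-1), rfl⟩
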